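/- Equip the real line with the set dL of continuous paths p : I → ℝ that are either constant or avoid 0 (i.e., 0 ∉ p(I)). Then (ℝ, dL) is a d-space, and the closure of dL in the space C(I, ℝ) of continuous maps with the compact-open topology is exactly the set of continuous paths p : I → ℝ with p(I) ⊆ [0, ∞) or p(I) ⊆ (−∞, 0]. In particular, this closure is not stable under concatenation. -/

import Mathlib

open unitInterval Topology Set

/-- Concatenation of two continuous paths `p q : C(I, X)` with `p 1 = q 0`,
traversing `p` on `[0, 1/2]` and `q` on `[1/2, 1]` (both at double speed). -/
noncomputable def concatPath {X : Type*} [TopologicalSpace X]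
    (p q : C(unitInterval, X)) (h : p 1 = q 0) : C(unitInterval, X) :=
  ((⟨p, rfl, rfl⟩ : Path (p 0) (p 1)).trans
    ((⟨q, rfl, rfl⟩ : Path (q 0) (q 1)).cast h rfl)).toContinuousMap

/-- A d-space structure on a topological space `X`: a set of continuous paths
`I → X` containing the constant paths, closed under concatenation and under
precomposition with continuous non-decreasing maps `I → I`. -/
structure DSpace (X : Type*) [TopologicalSpace X] where
  d : Set C(unitInterval, X)
  const_mem : ∀ x : X, ContinuousMap.const unitInterval x ∈ d
  concat_mem : ∀ p ∈ d, ∀ q ∈ d, ∀ h : p 1 = q 0, concatPath p q h ∈ d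
  reparam_mem : ∀ p ∈ d, ∀ φ : C(unitInterval, unitInterval), Monotone ⇑φ → p.comp φ ∈ d

/-- `c` is a directed function on the (open) set `U` for the set of directed
paths `d`: it is continuous on `U` and non-decreasing along every directed path
with image contained in `U`. -/
def IsDirectedFn {X : Type*} [TopologicalSpace X] (d : Set C(unitInterval, X))
    (U : Set X) (c : X → unitInterval) : Prop :=
  ContinuousOn c U ∧ ∀ p ∈ d, Set.range ⇑p ⊆ U → Monotone (c ∘ ⇑p)

/-- A path `p` is weakly directed when, for every directed function `c` on an
open `U`, the map `c ∘ p` is locally non-decreasing on `p ⁻¹' U`. -/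
def IsWeaklyDirected {X : Type*} [TopologicalSpace X] (d : Set C(unitInterval, X))
    (p : C(unitInterval, X)) : Prop :=
  ∀ U : Set X, IsOpen U → ∀ c : X → unitInterval, IsDirectedFn d U c →
    ∀ t : unitInterval, p t ∈ U →
      ∃ V ∈ 𝓝 t, V ⊆ ⇑p ⁻¹' U ∧ MonotoneOn (c ∘ ⇑p) V

/-- The set `d̂X` of weakly directed paths. -/
def satPaths {X : Type*} [TopologicalSpace X] (d : Set C(unitInterval, X)) :
    Set C(unitInterval, X) :=
  {p | IsWeaklyDirected d p}

/-- A set of directed paths is saturated when every weakly directed path is directed. -/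
def IsSaturated {X : Type*} [TopologicalSpace X] (d : Set C(unitInterval, X)) : Prop :=
  satPaths d = d

/-- The real line with directed paths those that are constant or avoid `0`. -/
def dL : Set C(unitInterval, ℝ) :=
  {p | (∃ x : ℝ, ∀ t, p t = x) ∨ ∀ t, p t ≠ 0}

lemma concatPath_range {X : Type*} [TopologicalSpace X] (p q : C(unitInterval, X))
    (h : p 1 = q 0) : range (concatPath p q h) = range p ∪ range q := by
  simp [concatPath, Path.trans_range]

lemma dL_concat : ∀ p ∈ dL, ∀ q ∈ dL, ∀ h : p 1 = q 0, concatPath p q h ∈ dL := by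
  rintro p hp q hq h
  have hrange : ∀ t, concatPath p q h t ∈ range p ∪ range q := by
    intro t
    rw [← concatPath_range p q h]
    exact mem_range_self t
  rcases hp with ⟨x, hx⟩ | hp
  · rcases hq with ⟨y, hy⟩ | hq
    · -- both constant, and x = y
      left
      refine ⟨x, fun t => ?_⟩
      have hxy : x = y := by rw [← hx 1, ← hy 0, h]
      rcases hrange t with ⟨s, hs⟩ | ⟨s, hs⟩
      · rw [← hs, hx]
      · rw [← hs, hy, hxy]
    · -- p constant x, q avoids 0; x = q 0 ≠ 0
      right
      intro t
      have hx0 : x ≠ 0 := by rw [← hx 1, h]; exact hq 0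
      rcases hrange t with ⟨s, hs⟩ | ⟨s, hs⟩
      · rw [← hs, hx]; exact hx0
      · rw [← hs]; exact hq s
  · rcases hq with ⟨y, hy⟩ | hq
    · right
      intro t
      have hy0 : y ≠ 0 := by rw [← hy 0, ← h]; exact hp 1
      rcases hrange t with ⟨s, hs⟩ | ⟨s, hs⟩
      · rw [← hs]; exact hp s
      · rw [← hs, hy]; exact hy0
    · right
      intro t
      rcases hrange t with ⟨s, hs⟩ | ⟨s, hs⟩
      · rw [← hs]; exact hp s
      · rw [← hs]; exact hq s

lemma dL_closure : closure dL = {p : C(unitInterval, ℝ) | (∀ t, 0 ≤ p t) ∨ ∀ t, p t ≤ 0} := by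
  ext p
  constructor
  · intro hp
    by_contra hc
    simp only [Set.mem_setOf_eq, not_or, not_forall, not_le] at hc
    obtain ⟨⟨s, hs⟩, ⟨t, ht⟩⟩ := hc
    -- p s < 0 < p t
    set ε := min (-(p s)) (p t) with hε
    have hεpos : 0 < ε := lt_min (by linarith) ht
    rw [Metric.mem_closure_iff] at hp
    obtain ⟨q, hq, hdist⟩ := hp ε hεpos
    rw [ContinuousMap.dist_lt_iff hεpos] at hdist
    have hqs : q s < 0 := by
      have := hdist s
      rw [Real.dist_eq, abs_lt] at this
      have : q s < p s + ε := by linarith [this.2]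
      have : p s + ε ≤ 0 := by
        have := min_le_left (-(p s)) (p t); linarith
      linarith
    have hqt : 0 < q t := by
      have h1 := hdist t
      rw [Real.dist_eq, abs_lt] at h1
      have h2 := min_le_right (-(p s)) (p t)
      linarith [h1.1]
    have h0 : (0 : ℝ) ∈ range ⇑q := by
      have hconn : IsPreconnected (range ⇑q) := isPreconnected_range q.continuous
      exact hconn.Icc_subset (mem_range_self s) (mem_range_self t) ⟨hqs.le, hqt.le⟩
    obtain ⟨u, hu⟩ := h0
    rcases hq with ⟨x, hx⟩ | hq
    · have h1 : q s = x := hx s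
      have h2 : q t = x := hx t
      linarith
    · exact hq u hu
  · intro hp
    rw [Metric.mem_closure_iff]
    intro ε hεpos
    rcases hp with hp | hp
    · refine ⟨p + ContinuousMap.const _ (ε/2), Or.inr fun t => ?_, ?_⟩
      · have := hp t
        simp only [ContinuousMap.add_apply, ContinuousMap.const_apply]
        positivity
      · rw [ContinuousMap.dist_lt_iff hεpos]
        intro t
        simp only [ContinuousMap.add_apply, ContinuousMap.const_apply, Real.dist_eq]
        rw [abs_of_nonpos (by linarith)]
        linarith
    · refine ⟨p - ContinuousMap.const _ (ε/2), Or.inr fun t => ?_, ?_⟩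
      · have := hp t
        simp only [ContinuousMap.sub_apply, ContinuousMap.const_apply]
        intro hcon
        linarith
      · rw [ContinuousMap.dist_lt_iff hεpos]
        intro t
        simp only [ContinuousMap.sub_apply, ContinuousMap.const_apply, Real.dist_eq]
        rw [abs_of_nonneg (by linarith)]
        linarith

/-- `(ℝ, dL)` is a d-space; the closure of `dL` in `C(I, ℝ)` (compact-open
topology, the default topology on `C(I, ℝ)`) is exactly the set of paths staying
in `[0, ∞)` or in `(-∞, 0]`; and this closure is not stable under concatenation. -/
theorem stmt_14 :
    (∀ x : ℝ, ContinuousMap.const unitInterval x ∈ dL) ∧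
    (∀ p ∈ dL, ∀ q ∈ dL, ∀ h : p 1 = q 0, concatPath p q h ∈ dL) ∧
    (∀ p ∈ dL, ∀ φ : C(unitInterval, unitInterval), Monotone ⇑φ → p.comp φ ∈ dL) ∧
    closure dL = {p : C(unitInterval, ℝ) | (∀ t, 0 ≤ p t) ∨ ∀ t, p t ≤ 0} ∧
    ¬ (∀ p ∈ closure dL, ∀ q ∈ closure dL, ∀ h : p 1 = q 0,
        concatPath p q h ∈ closure dL) := by
  refine ⟨fun x => Or.inl ⟨x, fun t => rfl⟩, dL_concat, ?_, dL_closure, ?_⟩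
  · rintro p (⟨x, hx⟩ | hp) φ hφ
    · exact Or.inl ⟨x, fun t => hx (φ t)⟩
    · exact Or.inr fun t => hp (φ t)
  · intro hstab
    set p : C(unitInterval, ℝ) := ⟨fun t => (t : ℝ) - 1, by fun_prop⟩ with hpdef
    set q : C(unitInterval, ℝ) := ⟨fun t => (t : ℝ), by fun_prop⟩ with hqdef
    have h : p 1 = q 0 := by simp [hpdef, hqdef]
    have hpcl : p ∈ closure dL := by
      rw [dL_closure]
      exact Or.inr fun t => by simp [hpdef]; exact t.2.2
    have hqcl : q ∈ closure dL := by
      rw [dL_closure]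
      exact Or.inl fun t => t.2.1
    have hcc := hstab p hpcl q hqcl h
    rw [dL_closure] at hcc
    have h0 : concatPath p q h 0 = p 0 := Path.source _
    have h1 : concatPath p q h 1 = q 1 := Path.target _
    rcases hcc with hcc | hcc
    · have := hcc 0
      rw [h0] at this
      simp [hpdef] at this
      linarith
    · have := hcc 1
      rw [h1] at this
      simp [hqdef] at this
      linarith
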